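/- Let K be a field of characteristic ≠ 2, let A, a, b ∈ K with B = b² − a³ − A·a, and let u, v ∈ K satisfy v² = u³ + Au + B and u ≠ a. Set x = (v + b)/(u − a) and y = 2u + a − x². Then (x² + y − a)/2 = u and (x³ + xy − 3ax − 2b)/2 = v. -/

import Mathlib

/-- The map to the quartic model followed by its inverse returns the original point:
with `x = (v+b)/(u−a)` and `y = 2u + a − x²`, one has `(x² + y − a)/2 = u` and
`(x³ + xy − 3ax − 2b)/2 = v`. -/
theorem quartic_map_left_inverse {K : Type*} [Field K] (hchar : (2 : K) ≠ 0)
    (A B a b u v : K) (hB : B = b ^ 2 - a ^ 3 - A * a)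
    (huv : v ^ 2 = u ^ 3 + A * u + B) (hua : u ≠ a)
    (x y : K) (hx : x = (v + b) / (u - a)) (hy : y = 2 * u + a - x ^ 2) :
    (x ^ 2 + y - a) / 2 = u ∧ (x ^ 3 + x * y - 3 * a * x - 2 * b) / 2 = v := by
  have hua' : u - a ≠ 0 := sub_ne_zero.mpr hua
  have hxv : x * (u - a) = v + b := by
    rw [hx]; field_simp
  constructor
  · rw [hy]; field_simp; ring
  · have : x ^ 3 + x * y - 3 * a * x - 2 * b = 2 * (x * (u - a) - b) := by
      rw [hy]; ring
    rw [this, hxv]; field_simp; ring
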